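/- For fixed positive integers a, b, j, and any element W = UP in the image of N_j : brew(j,a+b) × SH(a,b) → ℕ₀^{j×(a+b)}, write W = A·diag(U₁,U₂) with A ∈ QSH(u₁,u₂;j), U₁ ∈ brew(u₁,a), U₂ ∈ brew(u₂,b) (such a decomposition exists and is unique). Then the cardinality of the preimage N_j^{-1}(W) equals U!/(U₁!·U₂!), where the factorial of a brew-matrix is the product of factorials of the parts of its corresponding composition. -/

import Mathlib

/-- `IsBrew M`: `M` is the one-hot matrix encoding of a composition, i.e. its columns are
standard basis vectors `e_{ι j}` with `ι` weakly increasing, surjective, and with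
consecutive increments at most `1`. -/
def IsBrew {v ℓ : ℕ} (M : Matrix (Fin v) (Fin ℓ) ℕ) : Prop :=
  ∃ ι : Fin ℓ → Fin v, Monotone ι ∧ Function.Surjective ι ∧
    (∀ (j : ℕ) (h : j + 1 < ℓ),
      ((ι ⟨j + 1, h⟩ : Fin v) : ℕ) ≤ ((ι ⟨j, Nat.lt_of_succ_lt h⟩ : Fin v) : ℕ) + 1) ∧
    M = Matrix.of fun i j => if i = ι j then 1 else 0

/-- `IsQSH M` (for `M` of size `j × (m+s)`): the columns of `M` are standard basis vectors
`e_{ι₁},…,e_{ι_m},e_{κ₁},…,e_{κ_s}` with `ι` and `κ` strictly increasing, and `M` is right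
invertible (every standard basis vector occurs as a column). -/
def IsQSH {m s j : ℕ} (M : Matrix (Fin j) (Fin (m + s)) ℕ) : Prop :=
  ∃ ι : Fin m → Fin j, ∃ κ : Fin s → Fin j, StrictMono ι ∧ StrictMono κ ∧
    Function.Surjective (Sum.elim ι κ) ∧
    M = Matrix.of fun r c =>
      Sum.elim (fun p => if r = ι p then 1 else 0) (fun q => if r = κ q then 1 else 0)
        (finSumFinEquiv.symm c)

/-- `IsSH M`: `M` is a shuffle permutation matrix
`[e_{ι₁} ⋯ e_{ι_a} e_{κ₁} ⋯ e_{κ_b}]` with `ι`, `κ` strictly increasing. -/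
def IsSH {a b : ℕ} (M : Matrix (Fin (a + b)) (Fin (a + b)) ℕ) : Prop :=
  ∃ ι : Fin a → Fin (a + b), ∃ κ : Fin b → Fin (a + b), StrictMono ι ∧ StrictMono κ ∧
    Function.Bijective (Sum.elim ι κ) ∧
    M = Matrix.of fun r c =>
      Sum.elim (fun p => if r = ι p then 1 else 0) (fun q => if r = κ q then 1 else 0)
        (finSumFinEquiv.symm c)

/-- Block-diagonal concatenation `diag(U₁, U₂)` of rectangular matrices. -/
def blockDiag {u₁ u₂ a b : ℕ} (U₁ : Matrix (Fin u₁) (Fin a) ℕ)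
    (U₂ : Matrix (Fin u₂) (Fin b) ℕ) : Matrix (Fin (u₁ + u₂)) (Fin (a + b)) ℕ :=
  Matrix.reindex finSumFinEquiv finSumFinEquiv (Matrix.fromBlocks U₁ 0 0 U₂)

/-- The factorial `U!` of a brew matrix: the product of the factorials of the parts of
its corresponding composition (the parts are the row sums). -/
def brewFact {v ℓ : ℕ} (M : Matrix (Fin v) (Fin ℓ) ℕ) : ℕ :=
  ∏ i : Fin v, Nat.factorial (∑ j : Fin ℓ, M i j)

open Finset

lemma aux_le_iff {n j : ℕ} {g : Fin n → Fin j} (hg : Monotone g) (i : Fin j) (x : Fin n) :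
    g x ≤ i ↔ (x : ℕ) < (univ.filter fun y => g y ≤ i).card := by
  constructor
  · intro h
    have hsub : (Finset.Iic x) ⊆ univ.filter fun y => g y ≤ i := by
      intro y hy
      simp only [mem_filter, mem_univ, true_and]
      exact le_trans (hg (mem_Iic.1 hy)) h
    have h1 := card_le_card hsub
    rw [Fin.card_Iic] at h1
    omega
  · intro h
    by_contra hc
    push_neg at hc
    have hsub : (univ.filter fun y => g y ≤ i) ⊆ Finset.Iio x := by
      intro y hy
      simp only [mem_filter, mem_univ, true_and] at hy
      rw [mem_Iio]
      by_contra hxy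
      push_neg at hxy
      exact absurd (le_trans (hg hxy) hy) (not_le.2 hc)
    have h1 := card_le_card hsub
    rw [Fin.card_Iio] at h1
    omega

lemma aux_mono_eq {n j : ℕ} {g h : Fin n → Fin j} (hg : Monotone g) (hh : Monotone h)
    (hc : ∀ i, (univ.filter fun x => g x = i).card = (univ.filter fun x => h x = i).card) :
    g = h := by
  have hle : ∀ (g : Fin n → Fin j), (fun i => (univ.filter fun y => g y ≤ i).card)
      = fun i => ∑ i' ∈ Finset.Iic i, (univ.filter fun x => g x = i').card := by
    intro g
    funext i
    refine (Finset.card_eq_sum_card_fiberwise (f := g) (t := Finset.Iic i)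
      (fun x hx => mem_Iic.2 (mem_filter.1 hx).2)).trans ?_
    refine Finset.sum_congr rfl fun i' hi' => ?_
    congr 1
    ext x
    simp only [mem_filter, mem_univ, true_and]
    constructor
    · rintro ⟨_, h2⟩; exact h2
    · rintro rfl; exact ⟨mem_Iic.1 hi', rfl⟩
  have key : ∀ i x, (g x ≤ i ↔ h x ≤ i) := by
    intro i x
    rw [aux_le_iff hg, aux_le_iff hh, congrFun (hle g) i, congrFun (hle h) i,
      Finset.sum_congr rfl fun i' _ => hc i']
  funext x
  exact le_antisymm ((key (h x) x).2 le_rfl) ((key (g x) x).1 le_rfl)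

lemma aux_onehot_mul {l m n : ℕ} (ι : Fin m → Fin l) (σ : Fin n → Fin m) :
    (Matrix.of fun i k => if i = ι k then (1:ℕ) else 0) *
      (Matrix.of fun k c => if k = σ c then (1:ℕ) else 0) =
    Matrix.of fun i c => if i = ι (σ c) then 1 else 0 := by
  ext i c
  simp [Matrix.mul_apply, mul_ite, mul_one, mul_zero, Finset.sum_ite_eq']

lemma aux_onehot_inj {v ℓ : ℕ} {g h : Fin ℓ → Fin v}
    (H : Matrix.of (fun i c => if i = g c then (1:ℕ) else 0)
       = Matrix.of fun i c => if i = h c then 1 else 0) : g = h := by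
  funext c
  have := congrFun (congrFun H (g c)) c
  simp only [Matrix.of_apply, if_pos rfl] at this
  by_contra hc
  rw [if_neg hc] at this
  exact one_ne_zero this

lemma aux_sh_form {n a b : ℕ} (p₁ : Fin a → Fin n) (p₂ : Fin b → Fin n) :
    (Matrix.of fun (r : Fin n) (c : Fin (a+b)) =>
       Sum.elim (fun p => if r = p₁ p then (1:ℕ) else 0) (fun q => if r = p₂ q then 1 else 0)
         (finSumFinEquiv.symm c))
    = Matrix.of fun r c => if r = Sum.elim p₁ p₂ (finSumFinEquiv.symm c) then 1 else 0 := by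
  ext r c
  cases h : finSumFinEquiv.symm c <;> simp [h]

lemma aux_blockdiag_form {u₁ u₂ a b : ℕ} (ι₁ : Fin a → Fin u₁) (ι₂ : Fin b → Fin u₂) :
    blockDiag (Matrix.of fun i x => if i = ι₁ x then (1:ℕ) else 0)
        (Matrix.of fun i y => if i = ι₂ y then (1:ℕ) else 0)
    = Matrix.of fun k c =>
        if k = finSumFinEquiv (Sum.map ι₁ ι₂ (finSumFinEquiv.symm c)) then 1 else 0 := by
  have h1 : Matrix.fromBlocks (Matrix.of fun i x => if i = ι₁ x then (1:ℕ) else 0)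
      0 0 (Matrix.of fun i y => if i = ι₂ y then (1:ℕ) else 0)
      = Matrix.of fun s t => if s = Sum.map ι₁ ι₂ t then 1 else 0 := by
    ext s t
    cases s <;> cases t <;> simp [Matrix.fromBlocks]
  rw [blockDiag, h1]
  ext k c
  rw [Matrix.reindex_apply, Matrix.submatrix_apply, Matrix.of_apply, Matrix.of_apply]
  simp [Equiv.symm_apply_eq]

lemma aux_card_split {a b n j : ℕ} (e : Fin a ⊕ Fin b → Fin n) (he : Function.Bijective e)
    (g : Fin n → Fin j) (i : Fin j) :
    (univ.filter fun k => g k = i).card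
      = (univ.filter fun x => g (e (Sum.inl x)) = i).card
        + (univ.filter fun y => g (e (Sum.inr y)) = i).card := by
  classical
  rw [← Fintype.card_subtype, ← Fintype.card_subtype, ← Fintype.card_subtype, ← Fintype.card_sum]
  exact Fintype.card_congr
    (((Equiv.subtypeEquiv (Equiv.ofBijective e he) fun s => Iff.rfl).symm).trans Equiv.subtypeSum)

/-- for `W = U·P` in the image of `N_j`, decomposed (uniquely) as
`W = A · diag(U₁,U₂)` with `A ∈ QSH(u₁,u₂;j)`, `U₁ ∈ brew(u₁,a)`, `U₂ ∈ brew(u₂,b)`,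
the cardinality of the fibre `N_j⁻¹(W)` equals `U! / (U₁!·U₂!)`  (stated in the
equivalent multiplied-out form). -/
theorem card_fibre_N (a b j u₁ u₂ : ℕ) (ha : 0 < a) (hb : 0 < b) (hj : 0 < j)
    (W U : Matrix (Fin j) (Fin (a + b)) ℕ) (P : Matrix (Fin (a + b)) (Fin (a + b)) ℕ)
    (A : Matrix (Fin j) (Fin (u₁ + u₂)) ℕ)
    (U₁ : Matrix (Fin u₁) (Fin a) ℕ) (U₂ : Matrix (Fin u₂) (Fin b) ℕ)
    (hU : IsBrew U) (hP : IsSH P) (hW : W = U * P)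
    (hA : IsQSH A) (hU₁ : IsBrew U₁) (hU₂ : IsBrew U₂)
    (hdec : W = A * blockDiag U₁ U₂) :
    Nat.card {UP : Matrix (Fin j) (Fin (a + b)) ℕ ×
        Matrix (Fin (a + b)) (Fin (a + b)) ℕ //
        IsBrew UP.1 ∧ IsSH UP.2 ∧ UP.1 * UP.2 = W} *
      (brewFact U₁ * brewFact U₂) = brewFact U := by
  classical
  obtain ⟨ιU, hιUmono, hιUsurj, hιUstep, hUeq⟩ := hU
  obtain ⟨ι₁, hι₁mono, hι₁surj, hι₁step, hU₁eq⟩ := hU₁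
  obtain ⟨ι₂, hι₂mono, hι₂surj, hι₂step, hU₂eq⟩ := hU₂
  obtain ⟨ιA, κA, hιA, hκA, hAsurj, hAeq⟩ := hA
  set f₁ : Fin a → Fin j := fun x => ιA (ι₁ x) with hf₁
  set f₂ : Fin b → Fin j := fun y => κA (ι₂ y) with hf₂
  -- the one-hot form of W
  have hWform : W = Matrix.of fun r c =>
      if r = Sum.elim f₁ f₂ (finSumFinEquiv.symm c) then 1 else 0 := by
    rw [hdec, hAeq, hU₁eq, hU₂eq, aux_sh_form, aux_blockdiag_form, aux_onehot_mul]
    ext r c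
    rw [Matrix.of_apply, Matrix.of_apply]
    cases h : finSumFinEquiv.symm c <;> simp [h, hf₁, hf₂]
  -- every fibre element is given by a brew map and a shuffle compatible with f₁, f₂
  have key : ∀ U' P', IsBrew U' → IsSH P' → U' * P' = W →
      ∃ (ι' : Fin (a+b) → Fin j) (p₁ : Fin a → Fin (a+b)) (p₂ : Fin b → Fin (a+b)),
        Monotone ι' ∧ StrictMono p₁ ∧ StrictMono p₂ ∧
        Function.Bijective (Sum.elim p₁ p₂) ∧
        (U' = Matrix.of fun i k => if i = ι' k then 1 else 0) ∧
        (P' = Matrix.of fun k c =>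
          if k = Sum.elim p₁ p₂ (finSumFinEquiv.symm c) then 1 else 0) ∧
        (∀ x, ι' (p₁ x) = f₁ x) ∧ (∀ y, ι' (p₂ y) = f₂ y) := by
    rintro U' P' ⟨ι', hmono, -, -, hU'⟩ ⟨p₁, p₂, hp₁, hp₂, hbij, hP'⟩ hprod
    rw [aux_sh_form] at hP'
    have hcomp : (fun c => ι' (Sum.elim p₁ p₂ (finSumFinEquiv.symm c)))
        = fun c => Sum.elim f₁ f₂ (finSumFinEquiv.symm c) := by
      apply aux_onehot_inj
      rw [← aux_onehot_mul ι' (fun c => Sum.elim p₁ p₂ (finSumFinEquiv.symm c)), ← hU',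
        ← hP', hprod, hWform]
    refine ⟨ι', p₁, p₂, hmono, hp₁, hp₂, hbij, hU', hP', ?_, ?_⟩
    · intro x
      have := congrFun hcomp (Fin.castAdd b x)
      simpa [finSumFinEquiv_symm_apply_castAdd] using this
    · intro y
      have := congrFun hcomp (Fin.natAdd a y)
      simpa [finSumFinEquiv_symm_apply_natAdd] using this
  set m : Fin j → ℕ := fun i => (univ.filter fun k => ιU k = i).card with hm
  set m₁ : Fin j → ℕ := fun i => (univ.filter fun x => f₁ x = i).card with hm₁
  set m₂ : Fin j → ℕ := fun i => (univ.filter fun y => f₂ y = i).card with hm₂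
  have fib_eq : ∀ (ι' : Fin (a+b) → Fin j) (p₁ : Fin a → Fin (a+b)) (p₂ : Fin b → Fin (a+b)),
      Function.Bijective (Sum.elim p₁ p₂) → (∀ x, ι' (p₁ x) = f₁ x) → (∀ y, ι' (p₂ y) = f₂ y) →
      ∀ i, (univ.filter fun k => ι' k = i).card = m₁ i + m₂ i := by
    intro ι' p₁ p₂ hbij h1 h2 i
    rw [aux_card_split (Sum.elim p₁ p₂) hbij ι' i]
    have e1 : (univ.filter fun x => ι' (Sum.elim p₁ p₂ (Sum.inl x)) = i)
        = univ.filter fun x => f₁ x = i :=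
      filter_congr fun x _ => by rw [Sum.elim_inl, h1 x]
    have e2 : (univ.filter fun y => ι' (Sum.elim p₁ p₂ (Sum.inr y)) = i)
        = univ.filter fun y => f₂ y = i :=
      filter_congr fun y _ => by rw [Sum.elim_inr, h2 y]
    rw [e1, e2, hm₁, hm₂]
  have hmsum : ∀ i, m i = m₁ i + m₂ i := by
    obtain ⟨ι', p₁, p₂, hmono, hp₁, hp₂, hbij, hU'eq, hP'eq, h1, h2⟩ :=
      key U P ⟨ιU, hιUmono, hιUsurj, hιUstep, hUeq⟩ hP hW.symm
    have hι'U : ι' = ιU := aux_onehot_inj (hU'eq.symm.trans hUeq)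
    intro i
    rw [hm]
    exact (fib_eq ιU p₁ p₂ hbij (fun x => hι'U ▸ h1 x) (fun y => hι'U ▸ h2 y) i)
    -- the set of first-half columns of a shuffle matrix
  set Sof : Matrix (Fin (a+b)) (Fin (a+b)) ℕ → Finset (Fin (a+b)) :=
    fun P' => univ.filter fun r => ∃ x : Fin a, P' r (Fin.castAdd b x) = 1 with hSof
  have SofP : ∀ (P' : Matrix (Fin (a+b)) (Fin (a+b)) ℕ)
      (p₁ : Fin a → Fin (a+b)) (p₂ : Fin b → Fin (a+b)),
      (P' = Matrix.of fun k c =>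
        if k = Sum.elim p₁ p₂ (finSumFinEquiv.symm c) then 1 else 0) →
      Sof P' = univ.image p₁ := by
    intro P' p₁ p₂ hP'
    rw [hSof]
    ext r
    simp only [mem_filter, mem_univ, true_and, mem_image, hP', Matrix.of_apply,
      finSumFinEquiv_symm_apply_castAdd, Sum.elim_inl]
    constructor
    · rintro ⟨x, hx⟩
      by_cases h : r = p₁ x
      · exact ⟨x, h.symm⟩
      · rw [if_neg h] at hx; exact absurd hx.symm one_ne_zero
    · rintro ⟨x, rfl⟩
      exact ⟨x, if_pos rfl⟩
  -- full data for a fibre element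
  have zdata : ∀ z : {UP : Matrix (Fin j) (Fin (a + b)) ℕ ×
        Matrix (Fin (a + b)) (Fin (a + b)) ℕ //
        IsBrew UP.1 ∧ IsSH UP.2 ∧ UP.1 * UP.2 = W},
      ∃ (p₁ : Fin a → Fin (a+b)) (p₂ : Fin b → Fin (a+b)),
        StrictMono p₁ ∧ StrictMono p₂ ∧ Function.Bijective (Sum.elim p₁ p₂) ∧
        z.1.1 = U ∧
        (z.1.2 = Matrix.of fun k c =>
          if k = Sum.elim p₁ p₂ (finSumFinEquiv.symm c) then 1 else 0) ∧
        (∀ x, ιU (p₁ x) = f₁ x) ∧ (∀ y, ιU (p₂ y) = f₂ y) ∧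
        Sof z.1.2 = univ.image p₁ := by
    rintro ⟨⟨U', P'⟩, hbr, hsh, hpr⟩
    obtain ⟨ι', p₁, p₂, hmono, hp₁, hp₂, hbij, hU'eq, hP'eq, h1, h2⟩ := key U' P' hbr hsh hpr
    have hι'U : ι' = ιU := by
      refine aux_mono_eq hmono hιUmono fun i => ?_
      rw [fib_eq ι' p₁ p₂ hbij h1 h2 i]
      exact (hmsum i).symm
    have h1' : ∀ x, ιU (p₁ x) = f₁ x := fun x => hι'U ▸ h1 x
    have h2' : ∀ y, ιU (p₂ y) = f₂ y := fun y => hι'U ▸ h2 y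
    exact ⟨p₁, p₂, hp₁, hp₂, hbij, by show U' = U; rw [hU'eq, hι'U, ← hUeq], hP'eq, h1', h2',
      SofP P' p₁ p₂ hP'eq⟩
  have hcompl : ∀ (p₁ : Fin a → Fin (a+b)) (p₂ : Fin b → Fin (a+b)),
      Function.Bijective (Sum.elim p₁ p₂) → univ.image p₂ = (univ.image p₁)ᶜ := by
    intro p₁ p₂ hbij
    ext k
    rw [mem_compl]
    simp only [mem_image, mem_univ, true_and]
    constructor
    · rintro ⟨y, rfl⟩ ⟨x, hx⟩
      have hx' : Sum.elim p₁ p₂ (Sum.inl x) = Sum.elim p₁ p₂ (Sum.inr y) := hx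
      exact Sum.inl_ne_inr (hbij.1 hx')
    · intro hk
      obtain ⟨s, hs⟩ := hbij.2 k
      cases s with
      | inl x => exact absurd ⟨x, hs⟩ hk
      | inr y => exact ⟨y, hs⟩
  have hcard : Nat.card {UP : Matrix (Fin j) (Fin (a + b)) ℕ ×
        Matrix (Fin (a + b)) (Fin (a + b)) ℕ //
        IsBrew UP.1 ∧ IsSH UP.2 ∧ UP.1 * UP.2 = W}
      = Nat.card {S : Finset (Fin (a+b)) //
          ∀ i, (S.filter fun c => ιU c = i).card = m₁ i} := by
    apply Nat.card_congr
    have hprop : ∀ z : {UP : Matrix (Fin j) (Fin (a + b)) ℕ ×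
        Matrix (Fin (a + b)) (Fin (a + b)) ℕ //
        IsBrew UP.1 ∧ IsSH UP.2 ∧ UP.1 * UP.2 = W}, ∀ i : Fin j,
        ((Sof z.1.2).filter fun c => ιU c = i).card = m₁ i := by
      intro z i
      obtain ⟨p₁, p₂, hp₁, hp₂, hbij, hzU, hzP, h1, h2, hS⟩ := zdata z
      rw [hS, filter_image, card_image_of_injective _ hp₁.injective,
        filter_congr fun x _ => (by rw [h1 x] : (ιU (p₁ x) = i) ↔ (f₁ x = i)), hm₁]
    refine Equiv.ofBijective (fun z => ⟨Sof z.1.2, hprop z⟩) ⟨?_, ?_⟩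
    · -- injectivity
      rintro z z' h
      have hSS : Sof z.1.2 = Sof z'.1.2 := congrArg Subtype.val h
      obtain ⟨p₁, p₂, hp₁, hp₂, hbij, hzU, hzP, h1, h2, hS⟩ := zdata z
      obtain ⟨q₁, q₂, hq₁, hq₂, hbij', hzU', hzP', h1', h2', hS'⟩ := zdata z'
      have himg : univ.image p₁ = univ.image q₁ := by rw [← hS, ← hS', hSS]
      have hcard1 : (univ.image q₁).card = a := by
        rw [card_image_of_injective _ hq₁.injective, card_univ, Fintype.card_fin]
      have hp1q1 : p₁ = q₁ :=
        (orderEmbOfFin_unique hcard1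
            (fun x => by rw [← himg]; exact mem_image_of_mem _ (mem_univ x)) hp₁).trans
          (orderEmbOfFin_unique hcard1 (fun x => mem_image_of_mem _ (mem_univ x)) hq₁).symm
      have himg2 : univ.image p₂ = univ.image q₂ := by
        rw [hcompl p₁ p₂ hbij, hcompl q₁ q₂ hbij', hp1q1]
      have hcard2 : (univ.image q₂).card = b := by
        rw [card_image_of_injective _ hq₂.injective, card_univ, Fintype.card_fin]
      have hp2q2 : p₂ = q₂ :=
        (orderEmbOfFin_unique hcard2
            (fun y => by rw [← himg2]; exact mem_image_of_mem _ (mem_univ y)) hp₂).trans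
          (orderEmbOfFin_unique hcard2 (fun y => mem_image_of_mem _ (mem_univ y)) hq₂).symm
      apply Subtype.ext
      apply Prod.ext
      · rw [hzU, hzU']
      · rw [hzP, hzP', hp1q1, hp2q2]
    · -- surjectivity
      rintro ⟨S, hS⟩
      have hSa : S.card = a := by
        have h1 : S.card = ∑ i : Fin j, (S.filter fun c => ιU c = i).card :=
          card_eq_sum_card_fiberwise fun x _ => mem_univ _
        have h2 : (univ : Finset (Fin a)).card
            = ∑ i : Fin j, (univ.filter fun x => f₁ x = i).card :=
          card_eq_sum_card_fiberwise fun x _ => mem_univ _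
        rw [card_univ, Fintype.card_fin] at h2
        calc S.card = ∑ i : Fin j, (S.filter fun c => ιU c = i).card := h1
          _ = ∑ i : Fin j, m₁ i := Finset.sum_congr rfl fun i _ => hS i
          _ = a := by simp only [hm₁]; exact h2.symm
      have hSb : Sᶜ.card = b := by
        rw [card_compl, hSa, Fintype.card_fin]
        omega
      set p₁ := ⇑(S.orderEmbOfFin hSa) with hp₁def
      set p₂ := ⇑(Sᶜ.orderEmbOfFin hSb) with hp₂def
      have hp₁ : StrictMono p₁ := (S.orderEmbOfFin hSa).strictMono
      have hp₂ : StrictMono p₂ := (Sᶜ.orderEmbOfFin hSb).strictMono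
      have himg1 : univ.image p₁ = S := by
        ext k
        simp only [mem_image, mem_univ, true_and]
        constructor
        · rintro ⟨x, rfl⟩; exact orderEmbOfFin_mem S hSa x
        · intro hk
          have hk' : k ∈ Set.range p₁ := by
            rw [hp₁def, range_orderEmbOfFin]; exact Finset.mem_coe.2 hk
          obtain ⟨x, hx⟩ := hk'
          exact ⟨x, hx⟩
      have himg2 : univ.image p₂ = Sᶜ := by
        ext k
        simp only [mem_image, mem_univ, true_and]
        constructor
        · rintro ⟨y, rfl⟩; exact orderEmbOfFin_mem Sᶜ hSb y
        · intro hk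
          have hk' : k ∈ Set.range p₂ := by
            rw [hp₂def, range_orderEmbOfFin]; exact Finset.mem_coe.2 hk
          obtain ⟨y, hy⟩ := hk'
          exact ⟨y, hy⟩
      have hmemS : ∀ x, p₁ x ∈ S := fun x => by
        rw [← himg1]; exact mem_image_of_mem _ (mem_univ x)
      have hmemSc : ∀ y, p₂ y ∉ S := fun y => mem_compl.1 (by
        rw [← himg2]; exact mem_image_of_mem _ (mem_univ y))
      have hbij : Function.Bijective (Sum.elim p₁ p₂) := by
        rw [Fintype.bijective_iff_injective_and_card]
        refine ⟨?_, by simp⟩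
        rintro (x | y) (x' | y') h
        · rw [Sum.elim_inl, Sum.elim_inl] at h
          exact congrArg Sum.inl (hp₁.injective h)
        · rw [Sum.elim_inl, Sum.elim_inr] at h
          exact absurd (h ▸ hmemS x) (hmemSc y')
        · rw [Sum.elim_inr, Sum.elim_inl] at h
          exact absurd (h.symm ▸ hmemS x') (hmemSc y)
        · rw [Sum.elim_inr, Sum.elim_inr] at h
          exact congrArg Sum.inr (hp₂.injective h)
      have hfib1 : ∀ i, (univ.filter fun x => ιU (p₁ x) = i).card = m₁ i := by
        intro i
        have h3 := filter_image (f := p₁) (s := (univ : Finset (Fin a)))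
          (p := fun c => ιU c = i)
        rw [himg1] at h3
        rw [← card_image_of_injective (univ.filter fun x => ιU (p₁ x) = i) hp₁.injective,
          ← h3]
        exact hS i
      have hfib2 : ∀ i, (univ.filter fun y => ιU (p₂ y) = i).card = m₂ i := by
        intro i
        have h3 := filter_image (f := p₂) (s := (univ : Finset (Fin b)))
          (p := fun c => ιU c = i)
        rw [himg2] at h3
        have hsplit : (S.filter fun c => ιU c = i).card
            + (Sᶜ.filter fun c => ιU c = i).card = m i := by
          rw [← card_union_of_disjoint (disjoint_filter_filter disjoint_compl_right),
            ← filter_union, union_compl, hm]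
        have h4 : (Sᶜ.filter fun c => ιU c = i).card = m₂ i := by
          have e1 := hmsum i
          have e2 := hS i
          omega
        rw [← card_image_of_injective (univ.filter fun y => ιU (p₂ y) = i) hp₂.injective,
          ← h3]
        exact h4
      have hcomp1 : ∀ x, ιU (p₁ x) = f₁ x := by
        have hh := aux_mono_eq (g := fun x => ιU (p₁ x)) (h := f₁)
          (hιUmono.comp hp₁.monotone) (hιA.monotone.comp hι₁mono)
          (fun i => by rw [hfib1 i, hm₁])
        exact fun x => congrFun hh x
      have hcomp2 : ∀ y, ιU (p₂ y) = f₂ y := by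
        have hh := aux_mono_eq (g := fun y => ιU (p₂ y)) (h := f₂)
          (hιUmono.comp hp₂.monotone) (hκA.monotone.comp hι₂mono)
          (fun i => by rw [hfib2 i, hm₂])
        exact fun y => congrFun hh y
      refine ⟨⟨(U, Matrix.of fun r c =>
          Sum.elim (fun p => if r = p₁ p then 1 else 0) (fun q => if r = p₂ q then 1 else 0)
            (finSumFinEquiv.symm c)),
          ⟨ιU, hιUmono, hιUsurj, hιUstep, hUeq⟩,
          ⟨p₁, p₂, hp₁, hp₂, hbij, rfl⟩, ?_⟩, ?_⟩
      · show U * _ = W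
        rw [hUeq, aux_sh_form, aux_onehot_mul, hWform]
        ext r c
        rw [Matrix.of_apply, Matrix.of_apply]
        cases h : finSumFinEquiv.symm c <;> simp [h, hcomp1, hcomp2] <;> exact if_congr Iff.rfl rfl rfl
      · apply Subtype.ext
        show Sof _ = S
        rw [SofP _ p₁ p₂ (aux_sh_form p₁ p₂), himg1]
  -- counting subsets with prescribed fibre intersections
  have hfilt : ∀ (g : ∀ i : Fin j, {t : Finset (Fin (a+b)) //
        t ∈ powersetCard (m₁ i) (univ.filter fun c => ιU c = i)}) (i : Fin j),
      ((univ.biUnion fun i' => (g i').1).filter fun c => ιU c = i) = (g i).1 := by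
    intro g i
    have hsub : ∀ i', (g i').1 ⊆ univ.filter fun c => ιU c = i' :=
      fun i' => (mem_powersetCard.1 (g i').2).1
    ext c
    simp only [mem_filter, mem_biUnion, mem_univ, true_and]
    constructor
    · rintro ⟨⟨i', hi'⟩, hc⟩
      have hii : ιU c = i' := (mem_filter.1 (hsub i' hi')).2
      have : i' = i := hii.symm.trans hc
      exact this ▸ hi'
    · intro hc
      exact ⟨⟨i, hc⟩, (mem_filter.1 (hsub i hc)).2⟩
  have hT : Nat.card {S : Finset (Fin (a+b)) //
        ∀ i, (S.filter fun c => ιU c = i).card = m₁ i}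
      = ∏ i : Fin j, (m i).choose (m₁ i) := by
    have E : {S : Finset (Fin (a+b)) // ∀ i, (S.filter fun c => ιU c = i).card = m₁ i}
        ≃ ∀ i : Fin j, {t : Finset (Fin (a+b)) //
            t ∈ powersetCard (m₁ i) (univ.filter fun c => ιU c = i)} :=
      { toFun := fun S i => ⟨S.1.filter fun c => ιU c = i,
          mem_powersetCard.2 ⟨filter_subset_filter _ (subset_univ S.1), S.2 i⟩⟩
        invFun := fun g => ⟨univ.biUnion fun i => (g i).1, fun i => by
          rw [hfilt g i]; exact (mem_powersetCard.1 (g i).2).2⟩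
        left_inv := fun S => by
          apply Subtype.ext
          ext c
          simp only [mem_biUnion, mem_univ, true_and, mem_filter]
          constructor
          · rintro ⟨i, hcS, hci⟩
            exact hcS
          · intro hc
            exact ⟨ιU c, hc, rfl⟩
        right_inv := fun g => funext fun i => Subtype.ext (hfilt g i) }
    rw [Nat.card_congr E, Nat.card_pi]
    refine Finset.prod_congr rfl fun i _ => ?_
    refine (Nat.card_eq_finsetCard _).trans ?_
    rw [card_powersetCard, hm]
  -- row sums of one-hot matrices are fibre cardinalities
  have hrow : ∀ (v ℓ : ℕ) (ι : Fin ℓ → Fin v) (i : Fin v),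
      (∑ c : Fin ℓ, (Matrix.of fun i c => if i = ι c then (1:ℕ) else 0) i c)
        = (univ.filter fun c => ι c = i).card := by
    intro v ℓ ι i
    rw [card_filter]
    exact Finset.sum_congr rfl fun c _ => by
      rw [Matrix.of_apply]; exact if_congr eq_comm rfl rfl
  have hbrewU : brewFact U = ∏ i : Fin j, (m i).factorial := by
    rw [hUeq]
    simp only [brewFact]
    exact Finset.prod_congr rfl fun i _ => by rw [hrow, hm]
  have himage : ∀ (v ℓ : ℕ) (e : Fin v → Fin j) (ι : Fin ℓ → Fin v), Function.Injective e →
      (∏ i : Fin j, ((univ.filter fun x => e (ι x) = i).card).factorial)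
        = ∏ p : Fin v, ((univ.filter fun x => ι x = p).card).factorial := by
    intro v ℓ e ι he
    have h1 : ∀ i ∈ (univ : Finset (Fin j)), i ∉ univ.image e →
        ((univ.filter fun x => e (ι x) = i).card).factorial = 1 := by
      intro i _ hni
      have hempty : (univ.filter fun x => e (ι x) = i) = ∅ := by
        rw [filter_eq_empty_iff]
        intro x _
        exact fun hx => hni (hx ▸ mem_image_of_mem e (mem_univ (ι x)))
      rw [hempty, card_empty]
      rfl
    rw [← Finset.prod_subset (subset_univ (univ.image e)) h1,
      Finset.prod_image (fun p _ q _ h => he h)]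
    refine Finset.prod_congr rfl fun p _ => ?_
    congr 1
    congr 1
    exact filter_congr fun x _ => he.eq_iff
  have hbrewU₁ : brewFact U₁ = ∏ i : Fin j, (m₁ i).factorial := by
    rw [hU₁eq]
    simp only [brewFact]
    refine Eq.symm ?_
    calc ∏ i : Fin j, (m₁ i).factorial
        = ∏ i : Fin j, ((univ.filter fun x => ιA (ι₁ x) = i).card).factorial := by
          simp only [hm₁, hf₁]
      _ = ∏ p : Fin u₁, ((univ.filter fun x => ι₁ x = p).card).factorial :=
          himage u₁ a ιA ι₁ hιA.injective
      _ = ∏ p : Fin u₁, (∑ c : Fin a,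
            (Matrix.of fun i c => if i = ι₁ c then (1:ℕ) else 0) p c).factorial :=
          Finset.prod_congr rfl fun p _ => by rw [hrow]
  have hbrewU₂ : brewFact U₂ = ∏ i : Fin j, (m₂ i).factorial := by
    rw [hU₂eq]
    simp only [brewFact]
    refine Eq.symm ?_
    calc ∏ i : Fin j, (m₂ i).factorial
        = ∏ i : Fin j, ((univ.filter fun y => κA (ι₂ y) = i).card).factorial := by
          simp only [hm₂, hf₂]
      _ = ∏ q : Fin u₂, ((univ.filter fun y => ι₂ y = q).card).factorial :=
          himage u₂ b κA ι₂ hκA.injective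
      _ = ∏ q : Fin u₂, (∑ c : Fin b,
            (Matrix.of fun i c => if i = ι₂ c then (1:ℕ) else 0) q c).factorial :=
          Finset.prod_congr rfl fun q _ => by rw [hrow]
  rw [hcard, hT, hbrewU, hbrewU₁, hbrewU₂, ← Finset.prod_mul_distrib,
    ← Finset.prod_mul_distrib]
  refine Finset.prod_congr rfl fun i _ => ?_
  rw [hmsum i, ← Nat.add_choose_mul_factorial_mul_factorial (m₁ i) (m₂ i), ← mul_assoc, Nat.choose_symm_add]
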